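/- Define λ* ∈ ℝ^{2N} by λ*_{2k} = p₀·e^{−2εk}·e^{ε}/z and λ*_{2k+1} = p₀·e^{−2εk}·e^{−ε}/z for k = 0,…,N−1, where p₀ = (1 − e^{−2ε})/(1 − e^{−2εN}). Then λ* is a probability vector and is a fixed point of the full TSAC iteration: applying the reset step (ζ_{2k} = (λ_{2k}+λ_{2k+1})·e^{ε}/z, ζ_{2k+1} = (λ_{2k}+λ_{2k+1})·e^{−ε}/z) followed by the two-sort permutation (which fixes indices 0 and 2N−1 and swaps 2k−1 ↔ 2k for k = 1,…,N−1) returns λ* unchanged. -/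

import Mathlib

open Real Finset

private lemma tsacH (a b c : ℝ) (h : b + c ≠ 0) :
    (a * b / (b + c) + a * c / (b + c)) * b / (b + c) = a * b / (b + c) := by
  have hs : a * b / (b + c) + a * c / (b + c) = a := by
    rw [← add_div, ← mul_add, mul_div_assoc, div_self h, mul_one]
  rw [hs]

private lemma tsacH' (a b c : ℝ) (h : b + c ≠ 0) :
    (a * b / (b + c) + a * c / (b + c)) * c / (b + c) = a * c / (b + c) := by
  have hs : a * b / (b + c) + a * c / (b + c) = a := by
    rw [← add_div, ← mul_add, mul_div_assoc, div_self h, mul_one]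
  rw [hs]

private lemma sum_range_two_mul' (f : ℕ → ℝ) (m : ℕ) :
    ∑ i ∈ Finset.range (2 * m), f i = ∑ k ∈ Finset.range m, (f (2 * k) + f (2 * k + 1)) := by
  induction m with
  | zero => simp
  | succ m ih =>
    rw [show 2 * (m + 1) = 2 * m + 1 + 1 by ring, Finset.sum_range_succ, Finset.sum_range_succ,
      ih, Finset.sum_range_succ]
    ring


/-- The two-sort permutation on `{0, …, M-1}`: it fixes `0` and `M-1` and swaps
`2k-1 ↔ 2k` for every `k = 1, …, M/2 - 1`. -/
def sigmaTS (M : ℕ) : Fin M → Fin M := fun j =>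
  if h : (j : ℕ) % 2 = 1 ∧ (j : ℕ) < M - 1 then
    ⟨(j : ℕ) + 1, by have := j.isLt; omega⟩
  else if h' : (j : ℕ) % 2 = 0 ∧ (j : ℕ) ≠ 0 then
    ⟨(j : ℕ) - 1, by have := j.isLt; omega⟩
  else j

set_option maxHeartbeats 1000000 in
/-- The diagonal `λ*` of the optimal asymptotic cooling state of the full system,
`λ*_{2k} = p₀ e^{-2εk} e^{ε}/z` and `λ*_{2k+1} = p₀ e^{-2εk} e^{-ε}/z` with
`p₀ = (1 - e^{-2ε})/(1 - e^{-2εN})`, is a probability vector and is a fixed point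
of the full TSAC iteration: the reset step
`ζ_{2k} = (λ_{2k} + λ_{2k+1}) e^ε/z`, `ζ_{2k+1} = (λ_{2k} + λ_{2k+1}) e^{-ε}/z`
followed by the two-sort permutation returns `λ*` unchanged. -/
theorem tsac_full_oas_fixed_point (n : ℕ) (hn : 1 ≤ n) (ε : ℝ) (hε : 0 < ε)
    (lamStar ζ : Fin (2 * 2 ^ n) → ℝ)
    (hstar : ∀ j : Fin (2 * 2 ^ n), lamStar j =
      (1 - Real.exp (-2 * ε)) / (1 - Real.exp (-2 * ε * 2 ^ n)) *
        Real.exp (-2 * ε * ((j : ℕ) / 2 : ℕ)) *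
        (if (j : ℕ) % 2 = 0 then Real.exp ε else Real.exp (-ε)) /
        (Real.exp ε + Real.exp (-ε)))
    (hζ0 : ∀ k : Fin (2 ^ n), ζ ⟨2 * (k : ℕ), by have := k.isLt; omega⟩ =
      (lamStar ⟨2 * (k : ℕ), by have := k.isLt; omega⟩ +
        lamStar ⟨2 * (k : ℕ) + 1, by have := k.isLt; omega⟩) *
        Real.exp ε / (Real.exp ε + Real.exp (-ε)))
    (hζ1 : ∀ k : Fin (2 ^ n), ζ ⟨2 * (k : ℕ) + 1, by have := k.isLt; omega⟩ =
      (lamStar ⟨2 * (k : ℕ), by have := k.isLt; omega⟩ +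
        lamStar ⟨2 * (k : ℕ) + 1, by have := k.isLt; omega⟩) *
        Real.exp (-ε) / (Real.exp ε + Real.exp (-ε))) :
    (∀ j, 0 ≤ lamStar j) ∧ (∑ j, lamStar j = 1) ∧
      (∀ j, ζ (sigmaTS (2 * 2 ^ n) j) = lamStar j) := by
  have hz : (0:ℝ) < Real.exp ε + Real.exp (-ε) := by positivity
  have hzne : Real.exp ε + Real.exp (-ε) ≠ 0 := ne_of_gt hz
  have h1 : (0:ℝ) < 1 - Real.exp (-2 * ε) := by
    have := Real.exp_lt_one_iff.mpr (show -2 * ε < 0 by linarith)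
    linarith
  have h2 : (0:ℝ) < 1 - Real.exp (-2 * ε * 2 ^ n) := by
    have hp : (0:ℝ) < (2:ℝ) ^ n := by positivity
    have := Real.exp_lt_one_iff.mpr (show -2 * ε * 2 ^ n < 0 by nlinarith)
    linarith
  -- nonnegativity
  have hnonneg : ∀ j, 0 ≤ lamStar j := by
    intro j
    rw [hstar]
    have hp : (0:ℝ) ≤ (1 - Real.exp (-2 * ε)) / (1 - Real.exp (-2 * ε * 2 ^ n)) :=
      le_of_lt (div_pos h1 h2)
    apply div_nonneg _ (le_of_lt hz)
    apply mul_nonneg (mul_nonneg hp (Real.exp_nonneg _))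
    split <;> exact Real.exp_nonneg _
  refine ⟨hnonneg, ?_, ?_⟩
  · -- sum = 1
    set p : ℝ := (1 - Real.exp (-2 * ε)) / (1 - Real.exp (-2 * ε * 2 ^ n)) with hp
    have hcast : ∀ j : Fin (2 * 2 ^ n), lamStar j =
        (fun i : ℕ => p * Real.exp (-2 * ε * (i / 2 : ℕ)) *
          (if i % 2 = 0 then Real.exp ε else Real.exp (-ε)) /
          (Real.exp ε + Real.exp (-ε))) (j : ℕ) := fun j => hstar j
    calc ∑ j, lamStar j
        = ∑ i ∈ Finset.range (2 * 2 ^ n), (p * Real.exp (-2 * ε * (i / 2 : ℕ)) *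
            (if i % 2 = 0 then Real.exp ε else Real.exp (-ε)) /
            (Real.exp ε + Real.exp (-ε))) := by
          rw [← Fin.sum_univ_eq_sum_range]
          exact Finset.sum_congr rfl fun j _ => hcast j
      _ = ∑ k ∈ Finset.range (2 ^ n), p * Real.exp (-2 * ε) ^ k := by
          rw [sum_range_two_mul']
          refine Finset.sum_congr rfl fun k _ => ?_
          have e1 : 2 * k / 2 = k := by omega
          have e2 : (2 * k + 1) / 2 = k := by omega
          have e3 : 2 * k % 2 = 0 := by omega
          have e4 : (2 * k + 1) % 2 = 1 := by omega
          rw [e1, e2, e3, e4, if_pos rfl, if_neg one_ne_zero]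
          have hA : Real.exp (-2 * ε * (k:ℕ)) = Real.exp (-2 * ε) ^ k := by
            rw [← Real.exp_nat_mul]; ring_nf
          rw [hA]
          field_simp
      _ = p * ((Real.exp (-2 * ε) ^ (2 ^ n) - 1) / (Real.exp (-2 * ε) - 1)) := by
          rw [← Finset.mul_sum, geom_sum_eq (by linarith : Real.exp (-2 * ε) ≠ 1)]
      _ = 1 := by
          rw [hp]
          have hE : Real.exp (-2 * ε) ^ (2 ^ n) = Real.exp (-2 * ε * 2 ^ n) := by
            rw [← Real.exp_nat_mul]
            push_cast
            ring_nf
          rw [hE]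
          have hd : (1 - Real.exp (-2 * ε * 2 ^ n)) * (Real.exp (-2 * ε) - 1) ≠ 0 :=
            ne_of_lt (mul_neg_of_pos_of_neg h2 (by linarith))
          rw [div_mul_div_comm, div_eq_one_iff_eq hd]
          ring
  · -- fixed point
    have hζeq : ∀ j, ζ j = lamStar j := by
      intro j
      have hj := j.isLt
      rcases Nat.even_or_odd (j : ℕ) with ⟨k, hk⟩ | ⟨k, hk⟩
      · have hk' : (j : ℕ) = 2 * k := by omega
        have hklt : k < 2 ^ n := by omega
        have hje : j = (⟨2 * k, by omega⟩ : Fin (2 * 2 ^ n)) := Fin.ext (by simpa using hk')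
        have h0 := hζ0 ⟨k, hklt⟩
        simp only [Fin.val_mk] at h0
        rw [hje, h0, hstar, hstar]
        simp only [Fin.val_mk]
        have e1 : 2 * k / 2 = k := by omega
        have e2 : (2 * k + 1) / 2 = k := by omega
        have e3 : 2 * k % 2 = 0 := by omega
        have e4 : (2 * k + 1) % 2 = 1 := by omega
        rw [e1, e2, e3, e4, if_pos rfl, if_neg one_ne_zero]
        exact tsacH _ _ _ hzne
      · have hklt : k < 2 ^ n := by omega
        have hje : j = (⟨2 * k + 1, by omega⟩ : Fin (2 * 2 ^ n)) := Fin.ext (by simpa using hk)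
        have h0 := hζ1 ⟨k, hklt⟩
        simp only [Fin.val_mk] at h0
        rw [hje, h0, hstar, hstar]
        simp only [Fin.val_mk]
        have e1 : 2 * k / 2 = k := by omega
        have e2 : (2 * k + 1) / 2 = k := by omega
        have e3 : 2 * k % 2 = 0 := by omega
        have e4 : (2 * k + 1) % 2 = 1 := by omega
        rw [e1, e2, e3, e4, if_pos rfl, if_neg one_ne_zero]
        exact tsacH' _ _ _ hzne
    intro j
    rw [hζeq]
    unfold sigmaTS
    have hj := j.isLt
    split_ifs with h h'
    · -- j odd, j < M-1 : σ j = j + 1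
      obtain ⟨hodd, hlt⟩ := h
      rw [hstar, hstar]
      simp only [Fin.val_mk]
      obtain ⟨k, hk⟩ : ∃ k, (j : ℕ) = 2 * k + 1 := ⟨(j : ℕ) / 2, by omega⟩
      have e1 : ((j : ℕ) + 1) / 2 = k + 1 := by omega
      have e2 : (j : ℕ) / 2 = k := by omega
      have e3 : ((j : ℕ) + 1) % 2 = 0 := by omega
      rw [e1, e2, e3, hodd, if_pos rfl, if_neg one_ne_zero]
      have hA : Real.exp (-2 * ε * ((k + 1 : ℕ) : ℝ)) * Real.exp ε =
          Real.exp (-2 * ε * ((k : ℕ) : ℝ)) * Real.exp (-ε) := by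
        rw [← Real.exp_add, ← Real.exp_add]
        congr 1
        push_cast
        ring
      rw [mul_assoc, mul_assoc, hA, ← mul_assoc]
    · -- j even, j ≠ 0 : σ j = j - 1
      obtain ⟨heven, hne⟩ := h'
      rw [hstar, hstar]
      simp only [Fin.val_mk]
      obtain ⟨k, hk⟩ : ∃ k, (j : ℕ) = 2 * k + 2 := ⟨((j : ℕ) - 2) / 2, by omega⟩
      have e1 : ((j : ℕ) - 1) / 2 = k := by omega
      have e2 : (j : ℕ) / 2 = k + 1 := by omega
      have e3 : ((j : ℕ) - 1) % 2 = 1 := by omega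
      rw [e1, e2, e3, heven, if_pos rfl, if_neg one_ne_zero]
      have hA : Real.exp (-2 * ε * ((k : ℕ) : ℝ)) * Real.exp (-ε) =
          Real.exp (-2 * ε * ((k + 1 : ℕ) : ℝ)) * Real.exp ε := by
        rw [← Real.exp_add, ← Real.exp_add]
        congr 1
        push_cast
        ring
      rw [mul_assoc, mul_assoc, hA, ← mul_assoc]
    · rfl
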